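/- (Laplace/moment-generating-function limit under weak assumptions.) Let l : ℝ → ℝ be measurable with 0 ≤ l(x) ≤ 1 for all x, continuous at a point μ0 with l(μ0) > 0, and let δr ∈ ℝ and t ∈ ℝ be fixed. Then lim_{β → ∞} √(β/(2π)) · ∫_ℝ (l(x)/l(μ0)) · exp( t·√β·(x − μ0) − (β/2)(x − μ0)² − δr·(x − μ0) ) dx = exp(t²/2). -/

import Mathlib

open MeasureTheory Real Filter

lemma aux_integrable (c : ℝ) : Integrable (fun y : ℝ => Real.exp (c*y - y^2/2)) := by
  have h : ∀ y : ℝ, c*y - y^2/2 = -(2⁻¹ * (y - c)^2) + c^2/2 := by intro y; ring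
  have hg : Integrable (fun x : ℝ => Real.exp (-(2⁻¹ * x ^ 2))) := by
    simpa [neg_mul] using integrable_exp_neg_mul_sq (by norm_num : (0:ℝ) < 2⁻¹)
  have h1 : Integrable (fun y : ℝ => Real.exp (-(2⁻¹ * (y - c)^2))) :=
    ((measurePreserving_sub_right volume c).integrable_comp
      hg.aestronglyMeasurable).2 hg
  exact (h1.mul_const (Real.exp (c^2/2))).congr
    (Filter.Eventually.of_forall fun y => by
      show Real.exp (-(2⁻¹ * (y - c)^2)) * Real.exp (c^2/2) = Real.exp (c*y - y^2/2)
      rw [h y, Real.exp_add])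

lemma aux_sqrt_atTop : Tendsto Real.sqrt atTop atTop := by
  refine tendsto_atTop_atTop.2 fun b => ⟨b^2, fun a ha => ?_⟩
  calc b ≤ |b| := le_abs_self b
  _ = Real.sqrt (b^2) := (Real.sqrt_sq_eq_abs b).symm
  _ ≤ Real.sqrt a := Real.sqrt_le_sqrt ha

lemma aux_gauss_shift (c : ℝ) :
    ∫ y : ℝ, Real.exp (c*y - y^2/2) = Real.sqrt (2*Real.pi) * Real.exp (c^2/2) := by
  have h : ∀ y : ℝ, c*y - y^2/2 = -(2⁻¹ * (y - c)^2) + c^2/2 := by intro y; ring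
  simp_rw [h, Real.exp_add]
  rw [integral_mul_const]
  congr 1
  rw [integral_sub_right_eq_self (fun y : ℝ => Real.exp (-(2⁻¹ * y^2))) c]
  simp_rw [← neg_mul]
  rw [integral_gaussian]
  rw [show Real.pi / 2⁻¹ = 2 * Real.pi by ring]

/-- Laplace / moment-generating-function limit under weak
assumptions: for measurable `l` with `0 ≤ l ≤ 1`, continuous at `μ0` with
`l(μ0) > 0`, and fixed `δr, t ∈ ℝ`,
`√(β/(2π)) ∫ (l(x)/l(μ0)) exp(t√β(x−μ0) − (β/2)(x−μ0)² − δr(x−μ0)) dx → exp(t²/2)`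
as `β → ∞`. -/
theorem mgf_limit_weak_assumptions
    (l : ℝ → ℝ) (hmeas : Measurable l)
    (hl0 : ∀ x, 0 ≤ l x) (hl1 : ∀ x, l x ≤ 1)
    (μ0 : ℝ) (hcont : ContinuousAt l μ0) (hpos : 0 < l μ0)
    (δr t : ℝ) :
    Tendsto (fun β : ℝ =>
        Real.sqrt (β / (2 * Real.pi)) *
          ∫ x, (l x / l μ0) *
            Real.exp (t * Real.sqrt β * (x - μ0) - β / 2 * (x - μ0) ^ 2 -
              δr * (x - μ0)))
      atTop (nhds (Real.exp (t ^ 2 / 2))) := by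
  set G : ℝ → ℝ → ℝ := fun β y =>
    (l (μ0 + y / Real.sqrt β) / l μ0) *
      Real.exp (t * y - y ^ 2 / 2 - δr * (y / Real.sqrt β)) with hG
  -- Step 1: rewrite the expression for β ≥ 1
  have key : ∀ β : ℝ, 1 ≤ β →
      Real.sqrt (β / (2 * Real.pi)) *
          ∫ x, (l x / l μ0) *
            Real.exp (t * Real.sqrt β * (x - μ0) - β / 2 * (x - μ0) ^ 2 -
              δr * (x - μ0))
        = (Real.sqrt (2 * Real.pi))⁻¹ * ∫ y, G β y := by
    intro β hβ
    have hβ0 : (0:ℝ) < β := lt_of_lt_of_le one_pos hβ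
    have hs : (0:ℝ) < Real.sqrt β := Real.sqrt_pos.2 hβ0
    set φ : ℝ → ℝ := fun u =>
      (l (μ0 + u) / l μ0) *
        Real.exp (t * Real.sqrt β * u - β / 2 * u ^ 2 - δr * u) with hφ
    have h1 : ∫ x, (l x / l μ0) *
            Real.exp (t * Real.sqrt β * (x - μ0) - β / 2 * (x - μ0) ^ 2 -
              δr * (x - μ0)) = ∫ u, φ u := by
      rw [← integral_sub_right_eq_self φ μ0]
      congr 1; ext x
      simp only [hφ, add_sub_cancel]
    have h2 : ∫ y, G β y = Real.sqrt β * ∫ u, φ u := by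
      have := MeasureTheory.Measure.integral_comp_div φ (Real.sqrt β)
      rw [abs_of_pos hs, smul_eq_mul] at this
      rw [← this]
      congr 1; ext y
      simp only [G, hφ]
      congr 2
      field_simp
      ring_nf
      rw [Real.sq_sqrt hβ0.le]
    rw [h1, h2, Real.sqrt_div hβ0.le]
    have h2π : (0:ℝ) < Real.sqrt (2 * Real.pi) :=
      Real.sqrt_pos.2 (by positivity)
    field_simp
  -- Step 2: convergence of ∫ G β
  have hGtendsto : Tendsto (fun β => ∫ y, G β y) atTop
      (nhds (∫ y, Real.exp (t * y - y ^ 2 / 2))) := by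
    set bound : ℝ → ℝ := fun y =>
      (l μ0)⁻¹ * (Real.exp ((t + |δr|) * y - y ^ 2 / 2)
        + Real.exp ((t - |δr|) * y - y ^ 2 / 2)) with hbound
    apply tendsto_integral_filter_of_dominated_convergence bound
    · -- a.e.-measurability of G β, eventually
      filter_upwards [eventually_ge_atTop (1:ℝ)] with β hβ
      have : Measurable (G β) := by
        apply Measurable.mul
        · exact (hmeas.comp (measurable_const.add (measurable_id.div_const _))).div_const _
        · exact Real.measurable_exp.comp
            ((measurable_const.mul measurable_id).sub
              ((measurable_id.pow_const 2).div_const 2) |>.sub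
              (measurable_const.mul (measurable_id.div_const _)))
      exact this.aestronglyMeasurable
    · -- domination
      filter_upwards [eventually_ge_atTop (1:ℝ)] with β hβ
      have hβ0 : (0:ℝ) < β := lt_of_lt_of_le one_pos hβ
      have hs1 : (1:ℝ) ≤ Real.sqrt β := by
        rw [show (1:ℝ) = Real.sqrt 1 by simp]; exact Real.sqrt_le_sqrt hβ
      filter_upwards with y
      have hGnn : 0 ≤ G β y := by
        apply mul_nonneg (div_nonneg (hl0 _) hpos.le) (Real.exp_nonneg _)
      rw [Real.norm_of_nonneg hGnn]
      have hratio : l (μ0 + y / Real.sqrt β) / l μ0 ≤ (l μ0)⁻¹ := by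
        rw [div_eq_mul_inv]
        nth_rewrite 2 [← one_mul (l μ0)⁻¹]
        exact mul_le_mul_of_nonneg_right (hl1 _) (inv_nonneg.2 hpos.le)
      have harg : Real.exp (t * y - y ^ 2 / 2 - δr * (y / Real.sqrt β))
          ≤ Real.exp ((t + |δr|) * y - y ^ 2 / 2)
            + Real.exp ((t - |δr|) * y - y ^ 2 / 2) := by
        have hd : |δr * (y / Real.sqrt β)| ≤ |δr| * |y| := by
          rw [abs_mul, abs_div, abs_of_pos (lt_of_lt_of_le one_pos hs1)]
          exact mul_le_mul_of_nonneg_left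
            (div_le_self (abs_nonneg y) hs1) (abs_nonneg δr)
        rcases le_or_gt 0 y with hy | hy
        · refine le_trans ?_ (le_add_of_nonneg_right (Real.exp_nonneg _))
          apply Real.exp_le_exp.2
          have : -(δr * (y / Real.sqrt β)) ≤ |δr| * y := by
            calc -(δr * (y / Real.sqrt β)) ≤ |δr * (y / Real.sqrt β)| := neg_le_abs _
            _ ≤ |δr| * |y| := hd
            _ = |δr| * y := by rw [abs_of_nonneg hy]
          nlinarith [this]
        · refine le_trans ?_ (le_add_of_nonneg_left (Real.exp_nonneg _))
          apply Real.exp_le_exp.2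
          have : -(δr * (y / Real.sqrt β)) ≤ |δr| * (-y) := by
            calc -(δr * (y / Real.sqrt β)) ≤ |δr * (y / Real.sqrt β)| := neg_le_abs _
            _ ≤ |δr| * |y| := hd
            _ = |δr| * (-y) := by rw [abs_of_neg hy]
          nlinarith [this]
      calc G β y ≤ (l μ0)⁻¹ * Real.exp (t * y - y ^ 2 / 2 - δr * (y / Real.sqrt β)) :=
            mul_le_mul_of_nonneg_right hratio (Real.exp_nonneg _)
        _ ≤ bound y := by
            rw [hbound]
            exact mul_le_mul_of_nonneg_left harg (inv_nonneg.2 hpos.le)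
    · -- integrability of bound
      exact ((aux_integrable (t + |δr|)).add (aux_integrable (t - |δr|))).const_mul _
    · -- pointwise limit
      filter_upwards with y
      have h0 : Tendsto (fun β : ℝ => y / Real.sqrt β) atTop (nhds 0) := by
        simp_rw [div_eq_mul_inv]
        rw [show (0:ℝ) = y * 0 by ring]
        exact tendsto_const_nhds.mul (aux_sqrt_atTop.inv_tendsto_atTop)
      have hl : Tendsto (fun β : ℝ => l (μ0 + y / Real.sqrt β)) atTop (nhds (l μ0)) := by
        have : Tendsto (fun β : ℝ => μ0 + y / Real.sqrt β) atTop (nhds μ0) := by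
          rw [show nhds μ0 = nhds (μ0 + 0) by rw [add_zero]]
          exact tendsto_const_nhds.add h0
        exact hcont.tendsto.comp this
      have he : Tendsto (fun β : ℝ => Real.exp (t * y - y ^ 2 / 2 - δr * (y / Real.sqrt β)))
          atTop (nhds (Real.exp (t * y - y ^ 2 / 2))) := by
        have : Tendsto (fun β : ℝ => t * y - y ^ 2 / 2 - δr * (y / Real.sqrt β))
            atTop (nhds (t * y - y ^ 2 / 2)) := by
          rw [show nhds (t * y - y ^ 2 / 2) = nhds (t * y - y ^ 2 / 2 - δr * 0) by ring_nf]
          exact tendsto_const_nhds.sub (tendsto_const_nhds.mul h0)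
        exact (Real.continuous_exp.tendsto _).comp this
      have hfin := (hl.div_const (l μ0)).mul he
      rw [div_self hpos.ne', one_mul] at hfin
      exact hfin
  -- Step 3: the limit value
  have hval : ∫ y, Real.exp (t * y - y ^ 2 / 2) = Real.sqrt (2 * Real.pi) * Real.exp (t ^ 2 / 2) :=
    aux_gauss_shift t
  -- Combine
  have h2π : (0:ℝ) < Real.sqrt (2 * Real.pi) := Real.sqrt_pos.2 (by positivity)
  have final : Tendsto (fun β : ℝ => (Real.sqrt (2 * Real.pi))⁻¹ * ∫ y, G β y)
      atTop (nhds (Real.exp (t ^ 2 / 2))) := by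
    have := hGtendsto.const_mul (Real.sqrt (2 * Real.pi))⁻¹
    rwa [hval, ← mul_assoc, inv_mul_cancel₀ h2π.ne', one_mul] at this
  refine final.congr' ?_
  filter_upwards [eventually_ge_atTop (1:ℝ)] with β hβ
  exact (key β hβ).symm
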